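/- Let J be a symmetric Jacobi operator (β ≡ 0) on a one-ended levelled tree Γ that is not essentially self-adjoint, and let {x_n} be an infinite path with ℓ(x_n) = n. Then the classical Jacobi matrix J₀ on ℓ²(ℕ₀) with off-diagonal entries λ_n = λ_{x_n} and zero diagonal is not essentially self-adjoint; equivalently, Σ_{n≥1} [(λ_{x_0}λ_{x_2}⋯λ_{x_{2n−2}})/(λ_{x_1}λ_{x_3}⋯λ_{x_{2n−1}})]² + [(λ_{x_1}λ_{x_3}⋯λ_{x_{2n−1}})/(λ_{x_2}λ_{x_4}⋯λ_{x_{2n}})]² < ∞. -/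

import Mathlib

/-- A one-ended levelled tree: every vertex `x` has a unique upward neighbor
`parent x` (written `x'`) one level up, and a finite set `children x` of
downward neighbors one level down; the tree is connected with one end. -/
structure JTree where
  V : Type
  parent : V → V
  level : V → ℕ
  level_parent : ∀ x, level (parent x) = level x + 1
  children : V → Finset V
  mem_children : ∀ x y : V, y ∈ children x ↔ parent y = x
  connected : ∀ x y : V, ∃ k l : ℕ, parent^[k] x = parent^[l] y
  subtree_finite : ∀ x : V, {t : V | ∃ k : ℕ, parent^[k] t = x}.Finite

namespace JTree

variable (T : JTree)

/-- `T.descend t x` means `t` belongs to the finite subtree `Γ_x` below (and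
including) the vertex `x`. -/
def descend (t x : T.V) : Prop := ∃ k : ℕ, T.parent^[k] t = x

/-- The Jacobi operator on the tree:
`(Jv)(x) = λ_x v(x') + β_x v(x) + Σ_{y ∈ N_x} λ_y v(y)`. -/
noncomputable def jacobi (lam beta : T.V → ℝ) (v : T.V → ℂ) (x : T.V) : ℂ :=
  (lam x : ℂ) * v (T.parent x) + (beta x : ℂ) * v x +
    ∑ y ∈ T.children x, (lam y : ℂ) * v y

end JTree


namespace JTreeAux
open Finset
attribute [local instance] Classical.propDecidable
variable (T : JTree)

noncomputable def sub (x : T.V) : Finset T.V := (T.subtree_finite x).toFinset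

lemma mem_sub {t x : T.V} : t ∈ sub T x ↔ ∃ k, T.parent^[k] t = x := by
  simp [sub, Set.Finite.mem_toFinset]

lemma level_iterate (t : T.V) (k : ℕ) :
    T.level (T.parent^[k] t) = T.level t + k := by
  induction k with
  | zero => simp
  | succ k ih => rw [Function.iterate_succ_apply', T.level_parent, ih]; omega

lemma self_mem_sub (x : T.V) : x ∈ sub T x := (mem_sub T).mpr ⟨0, rfl⟩

lemma level_le_of_mem_sub {t x : T.V} (h : t ∈ sub T x) : T.level t ≤ T.level x := by
  obtain ⟨k, hk⟩ := (mem_sub T).mp h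
  have h2 := level_iterate T t k
  rw [hk] at h2; omega

lemma sub_subset_parent (x : T.V) : sub T x ⊆ sub T (T.parent x) := by
  intro t ht
  obtain ⟨k, hk⟩ := (mem_sub T).mp ht
  exact (mem_sub T).mpr ⟨k + 1, by rw [Function.iterate_succ_apply', hk]⟩

lemma not_mem_sub_child {x y : T.V} (hy : y ∈ T.children x) : x ∉ sub T y := by
  intro hx
  have h1 := level_le_of_mem_sub T hx
  have h2 : T.parent y = x := (T.mem_children x y).mp hy
  have h3 := T.level_parent y
  rw [h2] at h3; omega

lemma sub_child_subset {x y : T.V} (hy : y ∈ T.children x) : sub T y ⊆ sub T x := by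
  have h2 : T.parent y = x := (T.mem_children x y).mp hy
  intro t ht
  obtain ⟨k, hk⟩ := (mem_sub T).mp ht
  exact (mem_sub T).mpr ⟨k + 1, by rw [Function.iterate_succ_apply', hk, h2]⟩

lemma card_sub_child_lt {x y : T.V} (hy : y ∈ T.children x) :
    (sub T y).card < (sub T x).card := by
  apply Finset.card_lt_card
  rw [Finset.ssubset_iff_of_subset (sub_child_subset T hy)]
  exact ⟨x, self_mem_sub T x, not_mem_sub_child T hy⟩

lemma sub_eq (x : T.V) :
    sub T x = insert x ((T.children x).biUnion fun y => sub T y) := by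
  ext t
  simp only [mem_insert, mem_biUnion, mem_sub]
  constructor
  · rintro ⟨k, hk⟩
    cases k with
    | zero => left; exact hk
    | succ k =>
        right
        refine ⟨T.parent^[k] t, ?_, k, rfl⟩
        rw [T.mem_children]
        rw [← Function.iterate_succ_apply' T.parent k t]; exact hk
  · rintro (rfl | ⟨y, hy, k, rfl⟩)
    · exact ⟨0, rfl⟩
    · exact ⟨k + 1, by
        rw [Function.iterate_succ_apply']
        exact (T.mem_children x _).mp hy⟩

lemma sum_sub (f : T.V → ℝ) (x : T.V) :
    ∑ t ∈ sub T x, f t = f x + ∑ y ∈ T.children x, ∑ t ∈ sub T y, f t := by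
  rw [sub_eq T x, Finset.sum_insert, Finset.sum_biUnion]
  · intro y hy z hz hyz
    simp only [Function.onFun]
    rw [Finset.disjoint_left]
    intro t hty htz
    obtain ⟨k, hk⟩ := (mem_sub T).mp hty
    obtain ⟨k', hk'⟩ := (mem_sub T).mp htz
    have h1 := level_iterate T t k
    have h2 := level_iterate T t k'
    rw [hk] at h1; rw [hk'] at h2
    have hpy : T.parent y = x := (T.mem_children x y).mp hy
    have hpz : T.parent z = x := (T.mem_children x z).mp hz
    have h3 := T.level_parent y
    have h4 := T.level_parent z
    rw [hpy] at h3; rw [hpz] at h4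
    have hkk : k = k' := by omega
    exact hyz (by rw [← hk, ← hk', hkk])
  · simp only [mem_biUnion, not_exists]
    intro y hy
    exact not_mem_sub_child T hy.1 hy.2

lemma conj_mul_self (z : ℂ) : (starRingEnd ℂ) z * z = ((‖z‖ ^ 2 : ℝ) : ℂ) := by
  rw [mul_comm, Complex.mul_conj, Complex.normSq_eq_norm_sq]

lemma rho (lam : T.V → ℝ) (v : T.V → ℂ)
    (heig : ∀ t, T.jacobi lam (fun _ => 0) v t = Complex.I * v t) :
    ∀ (n : ℕ) (x : T.V), (sub T x).card ≤ n →
      (lam x : ℂ) * (starRingEnd ℂ) (v x) * v (T.parent x)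
        = Complex.I * ((∑ t ∈ sub T x, ‖v t‖ ^ 2 : ℝ) : ℂ) := by
  intro n
  induction n with
  | zero =>
      intro x hx
      exact absurd (Finset.card_pos.mpr ⟨x, self_mem_sub T x⟩) (by omega)
  | succ n ih =>
      intro x hx
      have heq := heig x
      unfold JTree.jacobi at heq
      have hchild : ∀ y ∈ T.children x,
          (lam y : ℂ) * (starRingEnd ℂ) (v x) * v y
            = - Complex.I * ((∑ t ∈ sub T y, ‖v t‖ ^ 2 : ℝ) : ℂ) := by
        intro y hy
        have hpy : T.parent y = x := (T.mem_children x y).mp hy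
        have h1 := ih y (by have := card_sub_child_lt T hy; omega)
        rw [hpy] at h1
        calc (lam y : ℂ) * (starRingEnd ℂ) (v x) * v y
            = (starRingEnd ℂ) ((lam y : ℂ) * (starRingEnd ℂ) (v y) * v x) := by
              simp [map_mul]; ring
          _ = (starRingEnd ℂ) (Complex.I * ((∑ t ∈ sub T y, ‖v t‖ ^ 2 : ℝ) : ℂ)) := by
              rw [h1]
          _ = - Complex.I * ((∑ t ∈ sub T y, ‖v t‖ ^ 2 : ℝ) : ℂ) := by
              simp [map_mul]
      have h2 := congrArg (fun z => (starRingEnd ℂ) (v x) * z) heq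
      simp only [mul_add, Complex.ofReal_zero, zero_mul, add_zero, mul_zero] at h2
      -- h2 : conj vx * (lam x * v (parent x)) + conj vx * (0 * v x) + conj vx * Σ = conj vx * (I * v x)
      have hs : (starRingEnd ℂ) (v x) * ∑ y ∈ T.children x, (lam y : ℂ) * v y
          = ∑ y ∈ T.children x, (lam y : ℂ) * (starRingEnd ℂ) (v x) * v y := by
        rw [Finset.mul_sum]
        exact Finset.sum_congr rfl (fun y _ => by ring)
      rw [hs, Finset.sum_congr rfl hchild] at h2
      have hVx : ((∑ t ∈ sub T x, ‖v t‖ ^ 2 : ℝ) : ℂ)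
          = ((‖v x‖ ^ 2 : ℝ) : ℂ)
            + ∑ y ∈ T.children x, ((∑ t ∈ sub T y, ‖v t‖ ^ 2 : ℝ) : ℂ) := by
        rw [sum_sub T (fun t => ‖v t‖ ^ 2) x]
        push_cast
        ring
      rw [hVx]
      have hcm : (starRingEnd ℂ) (v x) * (Complex.I * v x)
          = Complex.I * ((‖v x‖ ^ 2 : ℝ) : ℂ) := by
        rw [← conj_mul_self (v x)]; ring
      rw [hcm] at h2
      rw [Finset.sum_congr rfl (fun y _ => by rw [neg_mul] : ∀ y ∈ T.children x,
        - Complex.I * ((∑ t ∈ sub T y, ‖v t‖ ^ 2 : ℝ) : ℂ)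
          = -(Complex.I * ((∑ t ∈ sub T y, ‖v t‖ ^ 2 : ℝ) : ℂ)))] at h2
      rw [Finset.sum_neg_distrib] at h2
      rw [← Finset.mul_sum] at h2
      have : (lam x : ℂ) * (starRingEnd ℂ) (v x) * v (T.parent x)
          = (starRingEnd ℂ) (v x) * ((lam x : ℂ) * v (T.parent x)) := by ring
      rw [this]
      linear_combination h2
end JTreeAux

/-- If a symmetric Jacobi operator (`β ≡ 0`) on the tree is not essentially
self-adjoint (i.e. there is a nonzero `ℓ²` solution of `Jv = iv`), then the classical
Jacobi matrix along any infinite path is not essentially self-adjoint; equivalently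
`Σ_{n≥1} [(λ_{x_0}λ_{x_2}⋯λ_{x_{2n−2}})/(λ_{x_1}⋯λ_{x_{2n−1}})]²
 + [(λ_{x_1}⋯λ_{x_{2n−1}})/(λ_{x_2}⋯λ_{x_{2n}})]² < ∞`. -/
theorem stmt_6 (T : JTree) (lam : T.V → ℝ) (hlam : ∀ t, 0 < lam t)
    (x : ℕ → T.V) (hpath : ∀ n, x (n + 1) = T.parent (x n))
    (hx0 : T.level (x 0) = 0)
    (hnsa : ∃ v : T.V → ℂ, Summable (fun t => ‖v t‖ ^ 2) ∧ (∃ t, v t ≠ 0) ∧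
      ∀ t, T.jacobi lam (fun _ => 0) v t = Complex.I * v t) :
    Summable (fun n : ℕ =>
      ((∏ k ∈ Finset.range (n + 1), lam (x (2 * k))) /
        (∏ k ∈ Finset.range (n + 1), lam (x (2 * k + 1)))) ^ 2 +
      ((∏ k ∈ Finset.range (n + 1), lam (x (2 * k + 1))) /
        (∏ k ∈ Finset.range (n + 1), lam (x (2 * k + 2)))) ^ 2) := by
  classical
  obtain ⟨v, hsum, ⟨t0, ht0⟩, heig⟩ := hnsa
  set a : ℕ → ℝ := fun n => ‖v (x n)‖ with ha
  set Vr : ℕ → ℝ := fun n => ∑ t ∈ JTreeAux.sub T (x n), ‖v t‖ ^ 2 with hVrdef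
  have hanonneg : ∀ n, 0 ≤ a n := fun n => norm_nonneg _
  have hVnonneg : ∀ n, 0 ≤ Vr n := fun n => Finset.sum_nonneg (fun t _ => sq_nonneg _)
  have hrho : ∀ n, (lam (x n) : ℂ) * (starRingEnd ℂ) (v (x n)) * v (x (n + 1))
      = Complex.I * ((Vr n : ℝ) : ℂ) := by
    intro n
    have h := JTreeAux.rho T lam v heig ((JTreeAux.sub T (x n)).card) (x n) le_rfl
    rw [← hpath n] at h
    exact h
  have hkey : ∀ n, lam (x n) * (a n * a (n + 1)) = Vr n := by
    intro n
    have h := congrArg norm (hrho n)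
    simp only [norm_mul, Complex.norm_real, Complex.norm_I, one_mul,
      RCLike.norm_conj, Real.norm_eq_abs, abs_of_pos (hlam (x n)),
      abs_of_nonneg (hVnonneg n)] at h
    rw [← h]; ring
  have hmono : ∀ n, Vr n ≤ Vr (n + 1) := by
    intro n
    apply Finset.sum_le_sum_of_subset_of_nonneg
    · rw [hpath n]; exact JTreeAux.sub_subset_parent T (x n)
    · intro t _ _; exact sq_nonneg _
  have hmono' : Monotone Vr := monotone_nat_of_le_succ hmono
  have hxit : ∀ l, T.parent^[l] (x 0) = x l := by
    intro l
    induction l with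
    | zero => rfl
    | succ l ih => rw [Function.iterate_succ_apply', ih, ← hpath l]
  obtain ⟨k, l, hkl⟩ := T.connected t0 (x 0)
  have ht0mem : t0 ∈ JTreeAux.sub T (x l) :=
    (JTreeAux.mem_sub T).mpr ⟨k, by rw [hkl, hxit l]⟩
  have hVl : 0 < Vr l := by
    have h1 : 0 < ‖v t0‖ ^ 2 := by
      have := norm_pos_iff.mpr ht0
      positivity
    calc (0:ℝ) < ‖v t0‖ ^ 2 := h1
      _ ≤ Vr l := Finset.single_le_sum (f := fun t => ‖v t‖ ^ 2)
          (fun t _ => sq_nonneg _) ht0mem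
  have hzero : ∀ n, Vr n = 0 → Vr (n + 1) = 0 := by
    intro n h0
    have hall : ∀ t ∈ JTreeAux.sub T (x n), ‖v t‖ ^ 2 = 0 :=
      (Finset.sum_eq_zero_iff_of_nonneg (fun t _ => sq_nonneg _)).mp h0
    have hvx : v (x n) = 0 := by
      have h := hall (x n) (JTreeAux.self_mem_sub T (x n))
      simpa using h
    have hvy : ∀ y ∈ T.children (x n), v y = 0 := by
      intro y hy
      have hmem : y ∈ JTreeAux.sub T (x n) := (JTreeAux.mem_sub T).mpr
        ⟨1, by rw [Function.iterate_one]; exact (T.mem_children (x n) y).mp hy⟩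
      have h := hall y hmem
      simpa using h
    have heq := heig (x n)
    unfold JTree.jacobi at heq
    rw [hvx] at heq
    rw [Finset.sum_eq_zero (fun y hy => by rw [hvy y hy, mul_zero])] at heq
    have hv1 : v (x (n + 1)) = 0 := by
      rw [hpath n]
      have hl0 : (lam (x n) : ℂ) ≠ 0 := by exact_mod_cast (hlam (x n)).ne'
      simp only [mul_zero, add_zero, Complex.ofReal_zero, zero_mul] at heq
      exact (mul_eq_zero.mp heq).resolve_left hl0
    have h2 := hkey (n + 1)
    have ha1 : a (n + 1) = 0 := by simp [ha, hv1]
    rw [ha1] at h2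
    simpa using h2.symm
  have hVzero_prop : ∀ n j, Vr n = 0 → Vr (n + j) = 0 := by
    intro n j h
    induction j with
    | zero => exact h
    | succ j ih => exact (show n + (j + 1) = (n + j) + 1 by omega) ▸ hzero (n + j) ih
  have hVpos : ∀ n, 0 < Vr n := by
    intro n
    rcases (hVnonneg n).lt_or_eq with h | h
    · exact h
    · exfalso
      rcases le_or_gt l n with hln | hln
      · have := hmono' hln
        linarith
      · have h2 := hVzero_prop n (l - n) h.symm
        rw [show n + (l - n) = l from by omega] at h2
        linarith
  have hapos : ∀ n, 0 < a n := by
    intro n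
    rcases (hanonneg n).lt_or_eq with h | h
    · exact h
    · exfalso
      have h2 := hkey n
      rw [← h, zero_mul, mul_zero] at h2
      have := hVpos n
      linarith
  have hstep : ∀ m, lam (x m) / lam (x (m + 1)) ≤ a (m + 2) / a m := by
    intro m
    rw [div_le_div_iff₀ (hlam _) (hapos m)]
    have h1 := hkey m
    have h2 := hkey (m + 1)
    have h3 := hmono m
    nlinarith [hapos (m + 1), hapos (m + 2), hapos m, hlam (x m), hlam (x (m + 1))]
  have hP : ∀ n, (∏ k ∈ Finset.range (n + 1), lam (x (2 * k))) /
      (∏ k ∈ Finset.range (n + 1), lam (x (2 * k + 1))) ≤ a (2 * n + 2) / a 0 := by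
    intro n
    induction n with
    | zero => simpa using hstep 0
    | succ n ih =>
        have e1 : 2 * (n + 1) = 2 * n + 2 := by ring
        rw [Finset.prod_range_succ (fun k => lam (x (2 * k))) (n + 1),
          Finset.prod_range_succ (fun k => lam (x (2 * k + 1))) (n + 1), e1]
        calc (∏ k ∈ Finset.range (n + 1), lam (x (2 * k))) * lam (x (2 * n + 2)) /
              ((∏ k ∈ Finset.range (n + 1), lam (x (2 * k + 1))) * lam (x (2 * n + 2 + 1)))
            = ((∏ k ∈ Finset.range (n + 1), lam (x (2 * k))) /
                (∏ k ∈ Finset.range (n + 1), lam (x (2 * k + 1)))) *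
              (lam (x (2 * n + 2)) / lam (x (2 * n + 2 + 1))) := by
              rw [div_mul_div_comm]
          _ ≤ (a (2 * n + 2) / a 0) * (a (2 * n + 2 + 2) / a (2 * n + 2)) := by
              exact mul_le_mul ih (hstep (2 * n + 2))
                (div_nonneg (hlam _).le (hlam _).le)
                (div_nonneg (hanonneg _) (hanonneg _))
          _ = a (2 * n + 2 + 2) / a 0 := by
              have h0 := (hapos (2 * n + 2)).ne'
              have h1 := (hapos 0).ne'
              field_simp
  have hQ : ∀ n, (∏ k ∈ Finset.range (n + 1), lam (x (2 * k + 1))) /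
      (∏ k ∈ Finset.range (n + 1), lam (x (2 * k + 2))) ≤ a (2 * n + 3) / a 1 := by
    intro n
    induction n with
    | zero => simpa using hstep 1
    | succ n ih =>
        have e1 : 2 * (n + 1) + 1 = 2 * n + 3 := by ring
        have e2 : 2 * (n + 1) + 2 = 2 * n + 3 + 1 := by ring
        have e3 : 2 * (n + 1) + 3 = 2 * n + 3 + 2 := by ring
        rw [Finset.prod_range_succ (fun k => lam (x (2 * k + 1))) (n + 1),
          Finset.prod_range_succ (fun k => lam (x (2 * k + 2))) (n + 1), e1, e2, e3]
        calc (∏ k ∈ Finset.range (n + 1), lam (x (2 * k + 1))) * lam (x (2 * n + 3)) /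
              ((∏ k ∈ Finset.range (n + 1), lam (x (2 * k + 2))) * lam (x (2 * n + 3 + 1)))
            = ((∏ k ∈ Finset.range (n + 1), lam (x (2 * k + 1))) /
                (∏ k ∈ Finset.range (n + 1), lam (x (2 * k + 2)))) *
              (lam (x (2 * n + 3)) / lam (x (2 * n + 3 + 1))) := by
              rw [div_mul_div_comm]
          _ ≤ (a (2 * n + 3) / a 1) * (a (2 * n + 3 + 2) / a (2 * n + 3)) := by
              exact mul_le_mul ih (hstep (2 * n + 3))
                (div_nonneg (hlam _).le (hlam _).le)
                (div_nonneg (hanonneg _) (hanonneg _))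
          _ = a (2 * n + 3 + 2) / a 1 := by
              have h0 := (hapos (2 * n + 3)).ne'
              have h1 := (hapos 1).ne'
              field_simp
  have hlvl : ∀ n, T.level (x n) = n := by
    intro n
    induction n with
    | zero => exact hx0
    | succ n ih => rw [hpath n, T.level_parent, ih]
  have hinj2 : Function.Injective (fun n : ℕ => x (2 * n + 2)) := by
    intro m n h
    have h2 := congrArg T.level h
    simp only [hlvl] at h2
    omega
  have hinj3 : Function.Injective (fun n : ℕ => x (2 * n + 3)) := by
    intro m n h
    have h2 := congrArg T.level h
    simp only [hlvl] at h2
    omega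
  have hs2 : Summable (fun n : ℕ => ‖v (x (2 * n + 2))‖ ^ 2) := hsum.comp_injective hinj2
  have hs3 : Summable (fun n : ℕ => ‖v (x (2 * n + 3))‖ ^ 2) := hsum.comp_injective hinj3
  have hg : Summable (fun n : ℕ => (a (2 * n + 2) / a 0) ^ 2 + (a (2 * n + 3) / a 1) ^ 2) := by
    apply Summable.add
    · apply Summable.congr (hs2.mul_right (((a 0) ^ 2)⁻¹))
      intro n
      rw [div_pow, div_eq_mul_inv]
    · apply Summable.congr (hs3.mul_right (((a 1) ^ 2)⁻¹))
      intro n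
      rw [div_pow, div_eq_mul_inv]
  apply Summable.of_nonneg_of_le _ _ hg
  · intro n
    positivity
  · intro n
    have hP0 : (0:ℝ) ≤ (∏ k ∈ Finset.range (n + 1), lam (x (2 * k))) /
        (∏ k ∈ Finset.range (n + 1), lam (x (2 * k + 1))) :=
      div_nonneg (Finset.prod_nonneg fun k _ => (hlam _).le)
        (Finset.prod_nonneg fun k _ => (hlam _).le)
    have hQ0 : (0:ℝ) ≤ (∏ k ∈ Finset.range (n + 1), lam (x (2 * k + 1))) /
        (∏ k ∈ Finset.range (n + 1), lam (x (2 * k + 2))) :=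
      div_nonneg (Finset.prod_nonneg fun k _ => (hlam _).le)
        (Finset.prod_nonneg fun k _ => (hlam _).le)
    exact add_le_add (pow_le_pow_left₀ hP0 (hP n) 2) (pow_le_pow_left₀ hQ0 (hQ n) 2)
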